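/- arXiv:1807.05879 — 2 statements merged into one kernel-verified Lean document; each statement's English description precedes it below -/
import Mathlib

section
/- Let ρ : G^ℂ → GL(V^ℂ) be a holomorphic representation of a complex Lie group, U ⊆ G^ℂ a closed real subgroup with Lie algebra 𝔲 a compact real form of 𝔤^ℂ, and W ⊆ V^ℂ a real form (fixed points of an antilinear involution τ) with ρ(U)(W) ⊆ W. Then for every x ∈ 𝔲 and every v ∈ V^ℂ, τ(ρ(exp(−ix))·v) = ρ(exp(ix))·τ(v); more generally ρ is balanced: there is a global Cartan involution Θ of G^ℂ (as a real group) with fixed set U such that ρ(Θ(g)) = τ ∘ ρ(g) ∘ τ for all g ∈ G^ℂ in the image of the exponential–polar decomposition G^ℂ = U·exp(i𝔲). -/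
open NormedSpace


variable {m : ℕ}

private abbrev E (m : ℕ) := EuclideanSpace ℂ (Fin m)

private lemma comm_aux (τ : E m →ₗ[ℝ] E m)
    (hτinv : ∀ v, τ (τ v) = v)
    (hτanti : ∀ (c : ℂ) (v : E m), τ (c • v) = (starRingEnd ℂ) c • τ v)
    (C : E m →L[ℂ] E m) (hC : ∀ v, τ v = v → τ (C v) = C v) :
    ∀ v, τ (C v) = C (τ v) := by
  intro v
  have hconj2 : (starRingEnd ℂ) (1/2 : ℂ) = (1/2 : ℂ) := by norm_num [Complex.ext_iff]
  set w₁ : E m := (1/2 : ℂ) • (v + τ v) with hw₁def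
  set w₂ : E m := (-Complex.I) • ((1/2 : ℂ) • (v - τ v)) with hw₂def
  have hw₁ : τ w₁ = w₁ := by
    rw [hw₁def, hτanti, hconj2, map_add, hτinv, add_comm]
  have hw₂ : τ w₂ = w₂ := by
    rw [hw₂def, hτanti, hτanti, hconj2, map_sub, hτinv]
    simp only [map_neg, Complex.conj_I, neg_neg, smul_smul]
    rw [show Complex.I * (1/2 : ℂ) = -Complex.I * (1/2) * (-1 : ℂ) by ring]
    rw [← smul_smul]
    module
  have hv : v = w₁ + Complex.I • w₂ := by
    rw [hw₁def, hw₂def, smul_smul, smul_smul]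
    rw [show Complex.I * -Complex.I * (1/2) = (1/2 : ℂ) by
      norm_num [Complex.ext_iff]]
    module
  have hτv : τ v = w₁ - Complex.I • w₂ := by
    conv_lhs => rw [hv]
    rw [map_add, hw₁, hτanti, hw₂, Complex.conj_I, sub_eq_add_neg, neg_smul]
  calc τ (C v) = τ (C w₁ + Complex.I • C w₂) := by
        conv_lhs => rw [hv]
        simp only [map_add, map_smul]
    _ = C w₁ - Complex.I • C w₂ := by
        rw [map_add, hτanti, hC w₁ hw₁, hC w₂ hw₂, Complex.conj_I, sub_eq_add_neg, neg_smul]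
    _ = C (τ v) := by rw [hτv]; simp only [map_sub, map_smul]

/-- Conjugation by `τ` as a ℂ-linear operator (it is ℂ-linear since `τ` is antilinear). -/
private noncomputable def conjOp (τ : E m →ₗ[ℝ] E m)
    (hτanti : ∀ (c : ℂ) (v : E m), τ (c • v) = (starRingEnd ℂ) c • τ v)
    (T : E m →L[ℂ] E m) : E m →L[ℂ] E m :=
  LinearMap.toContinuousLinearMap
    { toFun := fun v => τ (T (τ v))
      map_add' := by intro x y; simp [map_add]
      map_smul' := by
        intro c x
        simp only [RingHom.id_apply, hτanti, map_smul, Complex.conj_conj] }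

@[simp] private lemma conjOp_apply (τ : E m →ₗ[ℝ] E m) (hτanti) (T : E m →L[ℂ] E m)
    (v : E m) : conjOp τ hτanti T v = τ (T (τ v)) := rfl

/-- Conjugation by `τ` as a continuous ℝ-algebra homomorphism of the operator algebra. -/
private noncomputable def conjHom (τ : E m →ₗ[ℝ] E m)
    (hτinv : ∀ v, τ (τ v) = v)
    (hτanti : ∀ (c : ℂ) (v : E m), τ (c • v) = (starRingEnd ℂ) c • τ v) :
    (E m →L[ℂ] E m) →ₐ[ℝ] (E m →L[ℂ] E m) where
  toFun := conjOp τ hτanti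
  map_one' := by ext v; simp [hτinv]
  map_mul' S T := by ext v; simp [hτinv]
  map_zero' := by ext v; simp
  map_add' S T := by ext v; simp [map_add]
  commutes' r := by
    ext v
    simp only [conjOp_apply]
    rw [show ((algebraMap ℝ (E m →L[ℂ] E m)) r) = r • (1 : E m →L[ℂ] E m) from
      Algebra.algebraMap_eq_smul_one r]
    simp [map_smul, hτinv]

private lemma conjHom_exp (τ : E m →ₗ[ℝ] E m) (hτinv) (hτanti) (T : E m →L[ℂ] E m) :
    conjHom τ hτinv hτanti (exp T) = exp (conjHom τ hτinv hτanti T) := by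
  let +nondep : NormedAlgebra ℚ (E m →L[ℂ] E m) := .restrictScalars ℚ ℂ _
  exact map_exp (conjHom τ hτinv hτanti)
    ((conjHom τ hτinv hτanti).toLinearMap.continuous_of_finiteDimensional) T

/-- if a compact real form acts preserving a real form `W` (the fixed set of an
antilinear involution `τ`), then for `x ∈ 𝔲` (here `A = dρ(x)`, which preserves `W`) one has
`τ(ρ(exp(−ix))·v) = ρ(exp(ix))·τ(v)`, and more generally the representation is balanced on the
polar decomposition `U·exp(i𝔲)`: `ρ(Θ(u·exp(ix))) = τ ∘ ρ(u·exp(ix)) ∘ τ`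
where `Θ(u·exp(ix)) = u·exp(−ix)` and `ρ(u) = B` preserves `W`. -/
theorem balanced_of_compact_real_form_preserves_real_form
    {m : ℕ} (τ : EuclideanSpace ℂ (Fin m) →ₗ[ℝ] EuclideanSpace ℂ (Fin m))
    (hτinv : ∀ v, τ (τ v) = v)
    (hτanti : ∀ (c : ℂ) (v : EuclideanSpace ℂ (Fin m)),
      τ (c • v) = (starRingEnd ℂ) c • τ v)
    (A : EuclideanSpace ℂ (Fin m) →L[ℂ] EuclideanSpace ℂ (Fin m))
    (hA : ∀ v, τ v = v → τ (A v) = A v)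
    (B : (EuclideanSpace ℂ (Fin m) →L[ℂ] EuclideanSpace ℂ (Fin m))ˣ)
    (hB : ∀ v, τ v = v → τ (B.val v) = B.val v) :
    (∀ v, τ (exp ((-Complex.I) • A) v) = exp (Complex.I • A) (τ v)) ∧
    (∀ v, τ ((B.val ∘L exp (Complex.I • A)) v) =
      (B.val ∘L exp ((-Complex.I) • A)) (τ v)) := by
  have hτA : ∀ v, τ (A v) = A (τ v) := comm_aux τ hτinv hτanti A hA
  have hτB : ∀ v, τ (B.val v) = B.val (τ v) := comm_aux τ hτinv hτanti B.val hB
  -- conjugation swaps `c • A` with `conj c • A`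
  have hconj : ∀ c : ℂ, conjHom τ hτinv hτanti (c • A) = (starRingEnd ℂ) c • A := by
    intro c
    refine ContinuousLinearMap.ext fun v => ?_
    show τ ((c • A) (τ v)) = ((starRingEnd ℂ) c • A) v
    rw [ContinuousLinearMap.smul_apply, hτanti, ContinuousLinearMap.smul_apply,
      ← hτA, hτinv]
  have key : ∀ c : ℂ, ∀ v, τ (exp (c • A) v) = exp ((starRingEnd ℂ) c • A) (τ v) := by
    intro c v
    have h := conjHom_exp τ hτinv hτanti (c • A)
    rw [hconj] at h
    have h2 := congrArg (fun (T : EuclideanSpace ℂ (Fin m) →L[ℂ] EuclideanSpace ℂ (Fin m)) => T (τ v)) h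
    have h3 : conjHom τ hτinv hτanti (exp (c • A)) (τ v)
        = τ (exp (c • A) v) := by
      show τ (exp (c • A) (τ (τ v))) = _
      rw [hτinv]
    rw [h3] at h2
    exact h2
  constructor
  · intro v
    have := key (-Complex.I) v
    simpa using this
  · intro v
    simp only [ContinuousLinearMap.coe_comp', Function.comp_apply]
    rw [hτB]
    congr 1
    have := key Complex.I v
    simpa using this
end

section
/- Let 𝔤 = 𝔬(n,ℂ) with the adjoint action of O(n,ℂ) restricted to the compact real form, and let f ∈ 𝔬(n,ℂ) decompose as f = f₊ + f₋, where f₊ ∈ 𝔬(n) and f₋ ∈ i𝔬(n). If [f₊, f₋] = 0, then f is a minimal vector for the adjoint action with respect to the norm induced by −tr(X Ȳᵀ): explicitly, ‖Ad(g)(f)‖ ≥ ‖f‖ for all g ∈ O(n,ℂ). -/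
open Matrix

lemma aux_sum_ineq' {n : ℕ} (μ : Fin n → ℝ) (c : Fin n → Fin n → ℝ)
    (hμ : ∀ i, 0 < μ i) (hc : ∀ i j, 0 ≤ c i j)
    (hbal : ∀ i, ∑ j, c i j = ∑ j, c j i) :
    ∑ i, ∑ j, c i j ≤ ∑ i, ∑ j, (μ i / μ j) * c i j := by
  have h2 : ∑ i, ∑ j, Real.log (μ i) * c i j = ∑ i, ∑ j, Real.log (μ j) * c i j := by
    calc ∑ i, ∑ j, Real.log (μ i) * c i j
        = ∑ i, ∑ j, Real.log (μ i) * c j i := by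
          refine Finset.sum_congr rfl fun i _ => ?_
          rw [← Finset.mul_sum, ← Finset.mul_sum, hbal i]
      _ = ∑ j, ∑ i, Real.log (μ i) * c j i := Finset.sum_comm
  have expand : ∑ i, ∑ j, (1 + (Real.log (μ i) - Real.log (μ j))) * c i j
      = (∑ i, ∑ j, c i j)
        + ((∑ i, ∑ j, Real.log (μ i) * c i j) - (∑ i, ∑ j, Real.log (μ j) * c i j)) := by
    simp only [add_mul, sub_mul, one_mul, Finset.sum_add_distrib, Finset.sum_sub_distrib]
  have key : ∀ i j, (1 + (Real.log (μ i) - Real.log (μ j))) * c i j ≤ (μ i / μ j) * c i j := by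
    intro i j
    refine mul_le_mul_of_nonneg_right ?_ (hc i j)
    have h1 : 0 < μ i / μ j := div_pos (hμ i) (hμ j)
    have h3 := Real.log_le_sub_one_of_pos h1
    rw [Real.log_div (hμ i).ne' (hμ j).ne'] at h3
    linarith
  calc ∑ i, ∑ j, c i j
      = ∑ i, ∑ j, (1 + (Real.log (μ i) - Real.log (μ j))) * c i j := by rw [expand, h2]; ring
    _ ≤ ∑ i, ∑ j, (μ i / μ j) * c i j :=
        Finset.sum_le_sum fun i _ => Finset.sum_le_sum fun j _ => key i j

lemma realAntisym_conjT {n : ℕ} (A : Matrix (Fin n) (Fin n) ℂ)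
    (h1 : ∀ i j, (A i j).im = 0) (h2 : Aᵀ = -A) : Aᴴ = -A := by
  ext i j
  have h3 := congrFun (congrFun h2 i) j
  simp only [transpose_apply, neg_apply] at h3
  simp only [conjTranspose_apply, neg_apply, ← h3, RingHom.coe_coe]
  exact Complex.ext rfl (by simp [h1])

set_option maxHeartbeats 1000000 in
lemma key_normal_min {n : ℕ} (f g : Matrix (Fin n) (Fin n) ℂ)
    (hg : gᵀ * g = 1) (hnormal : f * fᴴ = fᴴ * f)
    (aux_sum_ineq : ∀ (μ : Fin n → ℝ) (c : Fin n → Fin n → ℝ),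
      (∀ i, 0 < μ i) → (∀ i j, 0 ≤ c i j) → (∀ i, ∑ j, c i j = ∑ j, c j i) →
      ∑ i, ∑ j, c i j ≤ ∑ i, ∑ j, (μ i / μ j) * c i j) :
    (trace (f * fᴴ)).re ≤ (trace ((g * f * gᵀ) * (g * f * gᵀ)ᴴ)).re := by
  classical
  set c : ℂ →+* ℂ := starRingEnd ℂ with hc
  have hg' : g * gᵀ = 1 := mul_eq_one_comm.mp hg
  have hgtH : (gᵀ)ᴴ = g.map c := by ext i j; simp [conjTranspose_apply, hc]
  have hgHmap : gᴴ.map c = gᵀ := by ext i j; simp [conjTranspose_apply]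
  have hgH : gᴴ = gᵀ.map c := rfl
  have hH : (gᴴ * g).IsHermitian := isHermitian_conjTranspose_mul_self g
  set μ : Fin n → ℝ := hH.eigenvalues with hμdef
  set u : Matrix (Fin n) (Fin n) ℂ := (hH.eigenvectorUnitary : Matrix (Fin n) (Fin n) ℂ)
    with hudef
  have hu1 : u * star u = 1 := mem_unitaryGroup_iff.mp hH.eigenvectorUnitary.2
  set D : Matrix (Fin n) (Fin n) ℂ := diagonal (RCLike.ofReal ∘ μ) with hDdef
  have hspec : gᴴ * g = u * D * star u := hH.spectral_theorem
  -- eigenvalues are positive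
  have hdetg : det g ≠ 0 := by
    have h0 := congrArg det hg
    rw [det_mul, det_transpose, det_one] at h0
    intro h; rw [h, mul_zero] at h0; exact zero_ne_one h0
  have hdeth : det (gᴴ * g) ≠ 0 := by
    rw [det_mul, det_conjTranspose]
    exact mul_ne_zero (star_ne_zero.mpr hdetg) hdetg
  have hμpos : ∀ i, 0 < μ i := by
    intro i
    have hne' : μ i ≠ 0 := by
      intro h
      apply hdeth
      rw [hH.det_eq_prod_eigenvalues]
      refine Finset.prod_eq_zero (Finset.mem_univ i) ?_
      rw [show hH.eigenvalues i = μ i from rfl, h]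
      exact RCLike.ofReal_zero
    have hle : 0 ≤ μ i := by
      rw [hμdef]; exact eigenvalues_conjTranspose_mul_self_nonneg g i
    exact lt_of_le_of_ne hle (Ne.symm hne')
  set E : Matrix (Fin n) (Fin n) ℂ := diagonal (fun i => ((μ i : ℂ))⁻¹) with hEdef
  have hDE : D * E = 1 := by
    rw [hDdef, hEdef, diagonal_mul_diagonal]
    have : (fun i => (RCLike.ofReal ∘ μ) i * ((μ i : ℂ))⁻¹) = fun _ => (1 : ℂ) := by
      funext i
      exact mul_inv_cancel₀ (Complex.ofReal_ne_zero.mpr (hμpos i).ne')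
    rw [this, diagonal_one]
  have hr1 : (gᴴ * g) * ((gᴴ * g).map c) = 1 := by
    rw [Matrix.map_mul, hgHmap,
      show gᴴ * g * (gᵀ * g.map c) = gᴴ * (g * gᵀ) * g.map c from by simp only [mul_assoc],
      hg', mul_one, hgH, ← Matrix.map_mul, hg, Matrix.map_one c (map_zero c) (map_one c)]
  have hr2 : (gᴴ * g) * (u * E * star u) = 1 := by
    rw [hspec,
      show u * D * star u * (u * E * star u) = u * (D * ((star u * u) * (E * star u)))
        from by simp only [mul_assoc],
      mul_eq_one_comm.mp hu1, one_mul,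
      show u * (D * (E * star u)) = u * ((D * E) * star u) from by simp only [mul_assoc],
      hDE, one_mul, hu1]
  have hconj : (gᴴ * g).map c = u * E * star u := by
    rw [← inv_eq_right_inv hr1, ← inv_eq_right_inv hr2]
  set F : Matrix (Fin n) (Fin n) ℂ := star u * f * u with hFdef
  have hsuH : (star u)ᴴ = u := by
    rw [star_eq_conjTranspose, conjTranspose_conjTranspose]
  have hFH : Fᴴ = star u * fᴴ * u := by
    rw [hFdef, conjTranspose_mul, conjTranspose_mul, hsuH,
      show uᴴ = star u from (star_eq_conjTranspose u).symm]
    simp only [mul_assoc]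
  have hFmid : ∀ A B : Matrix (Fin n) (Fin n) ℂ,
      (star u * A * u) * (star u * B * u) = star u * (A * B) * u := by
    intro A B
    rw [show (star u * A * u) * (star u * B * u) = star u * (A * ((u * star u) * (B * u)))
        from by simp only [mul_assoc], hu1, one_mul]
    simp only [mul_assoc]
  have hFnormal : F * Fᴴ = Fᴴ * F := by
    rw [hFH, hFdef, hFmid, hFmid, hnormal]
  have htr1 : trace (F * Fᴴ) = trace (f * fᴴ) := by
    rw [hFH, hFdef, hFmid, trace_mul_comm,
      show u * (star u * (f * fᴴ)) = (u * star u) * (f * fᴴ) from by simp only [mul_assoc],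
      hu1, one_mul]
  have htr2 : trace ((g * f * gᵀ) * (g * f * gᵀ)ᴴ) = trace (F * E * Fᴴ * D) := by
    rw [conjTranspose_mul, conjTranspose_mul, hgtH,
      show g * f * gᵀ * (g.map c * (fᴴ * gᴴ)) = g * (f * (gᵀ * (g.map c * (fᴴ * gᴴ))))
        from by simp only [mul_assoc],
      trace_mul_comm,
      show f * (gᵀ * (g.map c * (fᴴ * gᴴ))) * g = f * (gᵀ * g.map c) * (fᴴ * (gᴴ * g))
        from by simp only [mul_assoc],
      show gᵀ * g.map c = (gᴴ * g).map c from by rw [Matrix.map_mul, hgHmap],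
      hconj, hspec,
      show f * (u * E * star u) * (fᴴ * (u * D * star u))
        = (f * (u * (E * (star u * (fᴴ * (u * D)))))) * star u from by simp only [mul_assoc],
      trace_mul_comm, hFdef, hFH]
    simp only [mul_assoc]
  have tr1 : (trace (F * Fᴴ)).re = ∑ i, ∑ j, Complex.normSq (F i j) := by
    simp only [Matrix.trace, Matrix.diag, Matrix.mul_apply, conjTranspose_apply,
      RCLike.star_def, Complex.mul_conj, Complex.re_sum, Complex.ofReal_re]
  have tr2 : (trace (F * E * Fᴴ * D)).re = ∑ i, ∑ j, (μ i / μ j) * Complex.normSq (F i j) := by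
    rw [show F * E * Fᴴ * D = (F * E) * (Fᴴ * D) from by simp only [mul_assoc]]
    have hterm : ∀ i j, (F * E) i j * (Fᴴ * D) j i
        = Complex.ofReal ((μ i / μ j) * Complex.normSq (F i j)) := by
      intro i j
      rw [hEdef, hDdef, mul_diagonal, mul_diagonal, conjTranspose_apply, RCLike.star_def,
        show ((RCLike.ofReal : ℝ → ℂ) ∘ μ) i = ((μ i : ℂ)) from rfl]
      rw [show F i j * ((μ j : ℂ))⁻¹ * ((starRingEnd ℂ) (F i j) * ((μ i : ℝ) : ℂ))
          = (F i j * (starRingEnd ℂ) (F i j)) * (((μ j : ℂ))⁻¹ * ((μ i : ℝ) : ℂ)) from by ring,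
        Complex.mul_conj]
      push_cast
      ring
    have trace_mul_apply : ∀ A B : Matrix (Fin n) (Fin n) ℂ,
        trace (A * B) = ∑ i, ∑ j, A i j * B j i := fun A B => by
      simp [Matrix.trace, Matrix.mul_apply]
    rw [trace_mul_apply]
    simp only [hterm, Complex.re_sum, Complex.ofReal_re]
  have hbal : ∀ i, ∑ j, Complex.normSq (F i j) = ∑ j, Complex.normSq (F j i) := by
    intro i
    have h0 : (F * Fᴴ) i i = (Fᴴ * F) i i := by rw [hFnormal]
    simp only [Matrix.mul_apply, conjTranspose_apply, RCLike.star_def] at h0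
    have h1 := congrArg Complex.re h0
    have hzz : ∀ z : ℂ, (z * (starRingEnd ℂ) z).re = Complex.normSq z := fun z => by
      rw [Complex.mul_conj, Complex.ofReal_re]
    have hzz' : ∀ z : ℂ, ((starRingEnd ℂ) z * z).re = Complex.normSq z := fun z => by
      rw [mul_comm, Complex.mul_conj, Complex.ofReal_re]
    simp only [Complex.re_sum, hzz, hzz'] at h1
    exact h1
  rw [← htr1, htr2, tr1, tr2]
  exact aux_sum_ineq μ (fun i j => Complex.normSq (F i j)) hμpos
    (fun i j => Complex.normSq_nonneg _) hbal

/-- let `f = f₊ + f₋ ∈ 𝔬(n,ℂ)` with `f₊ ∈ 𝔬(n)` (real antisymmetric) and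
`f₋ ∈ i𝔬(n)`. If `[f₊, f₋] = 0` then `f` is a minimal vector for the adjoint action of
`O(n,ℂ)` w.r.t. the norm with `‖X‖² = Re tr(X·X̄ᵀ)`: `‖Ad(g)(f)‖ ≥ ‖f‖` for all
`g ∈ O(n,ℂ)`. -/
theorem commuting_parts_give_minimal_vector
    {n : ℕ} (fp fm f : Matrix (Fin n) (Fin n) ℂ)
    -- `f₊ ∈ 𝔬(n)`: real antisymmetric
    (hfp : (∀ i j, (fp i j).im = 0) ∧ fpᵀ = -fp)
    -- `f₋ ∈ i𝔬(n)`: `i` times a real antisymmetric matrix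
    (hfm : ∃ y : Matrix (Fin n) (Fin n) ℂ, (∀ i j, (y i j).im = 0) ∧ yᵀ = -y ∧
      fm = Complex.I • y)
    (hf : f = fp + fm)
    -- `[f₊, f₋] = 0`
    (hcomm : fp * fm = fm * fp) :
    ∀ g : Matrix (Fin n) (Fin n) ℂ, gᵀ * g = 1 →
      (Matrix.trace (f * (f.map (starRingEnd ℂ))ᵀ)).re ≤
        (Matrix.trace ((g * f * g⁻¹) * ((g * f * g⁻¹).map (starRingEnd ℂ))ᵀ)).re := by
  obtain ⟨y, hy1, hy2, hy3⟩ := hfm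
  intro g hg
  -- conjugate transposes of the pieces
  have hfpH : fpᴴ = -fp := realAntisym_conjT fp hfp.1 hfp.2
  have hfmH : fmᴴ = fm := by
    rw [hy3, conjTranspose_smul, realAntisym_conjT y hy1 hy2]
    simp [Complex.conj_I]
  -- normality of f
  have hnormal : f * fᴴ = fᴴ * f := by
    subst hf
    rw [conjTranspose_add, hfpH, hfmH]
    simp only [Matrix.add_mul, Matrix.mul_add, Matrix.neg_mul, Matrix.mul_neg, hcomm]
    abel
  have hct : ∀ M : Matrix (Fin n) (Fin n) ℂ, (M.map (starRingEnd ℂ))ᵀ = Mᴴ := fun M => rfl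
  rw [hct, hct, inv_eq_right_inv (mul_eq_one_comm.mp hg)]
  exact key_normal_min f g hg hnormal aux_sum_ineq'
end
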